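/- Let X, Y, Z be locally compact Hausdorff spaces and R ⊆ X × Y, S ⊆ Y × Z closed subsets such that both coordinate projections of R and of S are proper maps. Then the composed relation SR = {(x,z) : ∃ y, (x,y) ∈ R ∧ (y,z) ∈ S} is a closed subset of X × Z with both projections proper. -/
import Mathlib

open Set

/-- The composition of two bi-proper relations is bi-proper. -/
theorem stmt12 {X Y Z : Type*} [TopologicalSpace X] [TopologicalSpace Y] [TopologicalSpace Z]
    [LocallyCompactSpace X] [LocallyCompactSpace Y] [LocallyCompactSpace Z]
    [T2Space X] [T2Space Y] [T2Space Z]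
    (R : Set (X × Y)) (S : Set (Y × Z)) (hR : IsClosed R) (hS : IsClosed S)
    (hR1 : IsProperMap (fun p : R => (p : X × Y).1))
    (hR2 : IsProperMap (fun p : R => (p : X × Y).2))
    (hS1 : IsProperMap (fun p : S => (p : Y × Z).1))
    (hS2 : IsProperMap (fun p : S => (p : Y × Z).2)) :
    IsClosed {q : X × Z | ∃ y : Y, (q.1, y) ∈ R ∧ (y, q.2) ∈ S} ∧
    IsProperMap (fun p : {q : X × Z | ∃ y : Y, (q.1, y) ∈ R ∧ (y, q.2) ∈ S} =>
      (p : X × Z).1) ∧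
    IsProperMap (fun p : {q : X × Z | ∃ y : Y, (q.1, y) ∈ R ∧ (y, q.2) ∈ S} =>
      (p : X × Z).2) := by
  set SR := {q : X × Z | ∃ y : Y, (q.1, y) ∈ R ∧ (y, q.2) ∈ S} with hSRdef
  set T : Set (X × Y × Z) := {p | (p.1, p.2.1) ∈ R ∧ (p.2.1, p.2.2) ∈ S} with hTdef
  have hTc : IsClosed T := by
    have h1 : IsClosed ((fun p : X × Y × Z => (p.1, p.2.1)) ⁻¹' R) :=
      hR.preimage (by fun_prop)
    have h2 : IsClosed ((fun p : X × Y × Z => (p.2.1, p.2.2)) ⁻¹' S) :=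
      hS.preimage (by fun_prop)
    exact h1.inter h2
  -- compactness of preimage of R ∩ (K × univ) for K compact
  have hRslice : ∀ K : Set X, IsCompact K → IsCompact (R ∩ K ×ˢ (univ : Set Y)) := by
    intro K hK
    have h := (hR1.isCompact_preimage hK).image continuous_subtype_val
    convert h using 1
    ext p
    simp only [mem_inter_iff, mem_prod, mem_univ, and_true, mem_image, mem_preimage,
      Subtype.exists, exists_and_right, exists_eq_right]
    tauto
  have hRslice2 : ∀ K : Set Y, IsCompact K → IsCompact (R ∩ (univ : Set X) ×ˢ K) := by
    intro K hK
    have h := (hR2.isCompact_preimage hK).image continuous_subtype_val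
    convert h using 1
    ext p
    simp only [mem_inter_iff, mem_prod, mem_univ, true_and, mem_image, mem_preimage,
      Subtype.exists, exists_and_right, exists_eq_right]
    tauto
  have hSslice : ∀ K : Set Y, IsCompact K → IsCompact (S ∩ K ×ˢ (univ : Set Z)) := by
    intro K hK
    have h := (hS1.isCompact_preimage hK).image continuous_subtype_val
    convert h using 1
    ext p
    simp only [mem_inter_iff, mem_prod, mem_univ, and_true, mem_image, mem_preimage,
      Subtype.exists, exists_and_right, exists_eq_right]
    tauto
  have hSslice2 : ∀ K : Set Z, IsCompact K → IsCompact (S ∩ (univ : Set Y) ×ˢ K) := by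
    intro K hK
    have h := (hS2.isCompact_preimage hK).image continuous_subtype_val
    convert h using 1
    ext p
    simp only [mem_inter_iff, mem_prod, mem_univ, true_and, mem_image, mem_preimage,
      Subtype.exists, exists_and_right, exists_eq_right]
    tauto
  -- key: slices of T over compact sets in X are compact
  have key1 : ∀ K : Set X, IsCompact K → IsCompact (T ∩ K ×ˢ (univ : Set (Y × Z))) := by
    intro K hK
    have hRK := hRslice K hK
    set C : Set Y := Prod.snd '' (R ∩ K ×ˢ (univ : Set Y)) with hCdef
    have hC : IsCompact C := hRK.image continuous_snd
    have hSC := hSslice C hC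
    set D : Set Z := Prod.snd '' (S ∩ C ×ˢ (univ : Set Z)) with hDdef
    have hD : IsCompact D := hSC.image continuous_snd
    have hsub : T ∩ K ×ˢ (univ : Set (Y × Z)) ⊆ K ×ˢ (C ×ˢ D) := by
      rintro ⟨x, y, z⟩ ⟨⟨hxy, hyz⟩, hx, -⟩
      have hyC : y ∈ C := ⟨(x, y), ⟨hxy, hx, trivial⟩, rfl⟩
      have hzD : z ∈ D := ⟨(y, z), ⟨hyz, hyC, trivial⟩, rfl⟩
      exact ⟨hx, hyC, hzD⟩
    exact (hK.prod (hC.prod hD)).of_isClosed_subset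
      (hTc.inter (hK.isClosed.prod isClosed_univ)) hsub
  -- key: slices of T over compact sets in Z are compact
  have key2 : ∀ K : Set Z, IsCompact K →
      IsCompact (T ∩ {p : X × Y × Z | p.2.2 ∈ K}) := by
    intro K hK
    have hSK := hSslice2 K hK
    set C : Set Y := Prod.fst '' (S ∩ (univ : Set Y) ×ˢ K) with hCdef
    have hC : IsCompact C := hSK.image continuous_fst
    have hRC := hRslice2 C hC
    set D : Set X := Prod.fst '' (R ∩ (univ : Set X) ×ˢ C) with hDdef
    have hD : IsCompact D := hRC.image continuous_fst
    have hsub : T ∩ {p : X × Y × Z | p.2.2 ∈ K} ⊆ D ×ˢ (C ×ˢ K) := by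
      rintro ⟨x, y, z⟩ ⟨⟨hxy, hyz⟩, hz⟩
      have hyC : y ∈ C := ⟨(y, z), ⟨hyz, trivial, hz⟩, rfl⟩
      have hxD : x ∈ D := ⟨(x, y), ⟨hxy, trivial, hyC⟩, rfl⟩
      exact ⟨hxD, hyC, hz⟩
    have hclosed : IsClosed (T ∩ {p : X × Y × Z | p.2.2 ∈ K}) := by
      refine hTc.inter (hK.isClosed.preimage (by fun_prop))
    exact (hD.prod (hC.prod hK)).of_isClosed_subset hclosed hsub
  -- the projection map from T to X × Z
  set f : T → X × Z := fun t => ((t : X × Y × Z).1, (t : X × Y × Z).2.2) with hfdef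
  have hfcont : Continuous f := by fun_prop
  have hfcompact : ∀ K : Set (X × Z), IsCompact K → IsCompact (f ⁻¹' K) := by
    intro K hK
    rw [Subtype.isCompact_iff]
    have h1 : IsCompact (Prod.fst '' K) := hK.image continuous_fst
    refine (key1 _ h1).of_isClosed_subset ?_ ?_
    · have heq : (Subtype.val '' (f ⁻¹' K) : Set (X × Y × Z))
          = T ∩ (fun p : X × Y × Z => (p.1, p.2.2)) ⁻¹' K := by
        ext p
        constructor
        · rintro ⟨⟨q, hq⟩, hqK, rfl⟩
          exact ⟨hq, hqK⟩
        · rintro ⟨hp, hpK⟩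
          exact ⟨⟨p, hp⟩, hpK, rfl⟩
      rw [heq]
      exact hTc.inter (hK.isClosed.preimage (by fun_prop :
        Continuous (fun p : X × Y × Z => (p.1, p.2.2))))
    · rintro p ⟨⟨q, hq⟩, hqK, rfl⟩
      exact ⟨hq, ⟨(q.1, q.2.2), hqK, rfl⟩, trivial⟩
  have hfproper : IsProperMap f := isProperMap_iff_isCompact_preimage.2 ⟨hfcont, hfcompact⟩
  have hrange : range f = SR := by
    ext ⟨x, z⟩
    simp only [mem_range, hSRdef, mem_setOf_eq]
    constructor
    · rintro ⟨⟨⟨x', y, z'⟩, hxy, hyz⟩, h⟩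
      simp only [hfdef, Prod.mk.injEq] at h
      exact ⟨y, by simpa [h.1, h.2] using And.intro hxy hyz⟩
    · rintro ⟨y, hxy, hyz⟩
      exact ⟨⟨⟨x, y, z⟩, hxy, hyz⟩, rfl⟩
  have hSRc : IsClosed SR := hrange ▸ hfproper.isClosedMap.isClosed_range
  refine ⟨hSRc, ?_, ?_⟩
  · -- first projection proper
    refine isProperMap_iff_isCompact_preimage.2 ⟨by fun_prop, ?_⟩
    intro K hK
    rw [Subtype.isCompact_iff]
    have himg : (↑) '' ((fun p : SR => (p : X × Z).1) ⁻¹' K)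
        = f '' ((fun t : T => (t : X × Y × Z).1) ⁻¹' K) := by
      ext q
      constructor
      · rintro ⟨⟨⟨x, z⟩, y, hxy, hyz⟩, hxK, rfl⟩
        exact ⟨⟨(x, y, z), by exact ⟨hxy, hyz⟩⟩, hxK, rfl⟩
      · rintro ⟨⟨⟨x, y, z⟩, hxy, hyz⟩, hxK, rfl⟩
        exact ⟨⟨(x, z), y, hxy, hyz⟩, hxK, rfl⟩
    rw [himg]
    have : IsCompact ((fun t : T => (t : X × Y × Z).1) ⁻¹' K) := by
      rw [Subtype.isCompact_iff]
      have heq : ((↑) '' ((fun t : T => (t : X × Y × Z).1) ⁻¹' K) : Set (X × Y × Z))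
          = T ∩ K ×ˢ (univ : Set (Y × Z)) := by
        ext p
        simp only [mem_image, mem_preimage, Subtype.exists, mem_inter_iff, mem_prod,
          mem_univ, and_true, exists_and_right, exists_eq_right]
        tauto
      rw [heq]
      exact key1 K hK
    exact this.image hfcont
  · -- second projection proper
    refine isProperMap_iff_isCompact_preimage.2 ⟨by fun_prop, ?_⟩
    intro K hK
    rw [Subtype.isCompact_iff]
    have himg : (↑) '' ((fun p : SR => (p : X × Z).2) ⁻¹' K)
        = f '' ((fun t : T => (t : X × Y × Z).2.2) ⁻¹' K) := by
      ext q
      constructor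
      · rintro ⟨⟨⟨x, z⟩, y, hxy, hyz⟩, hzK, rfl⟩
        exact ⟨⟨(x, y, z), by exact ⟨hxy, hyz⟩⟩, hzK, rfl⟩
      · rintro ⟨⟨⟨x, y, z⟩, hxy, hyz⟩, hzK, rfl⟩
        exact ⟨⟨(x, z), y, hxy, hyz⟩, hzK, rfl⟩
    rw [himg]
    have : IsCompact ((fun t : T => (t : X × Y × Z).2.2) ⁻¹' K) := by
      rw [Subtype.isCompact_iff]
      have heq : ((↑) '' ((fun t : T => (t : X × Y × Z).2.2) ⁻¹' K) : Set (X × Y × Z))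
          = T ∩ {p : X × Y × Z | p.2.2 ∈ K} := by
        ext p
        simp only [mem_image, mem_preimage, Subtype.exists, mem_inter_iff, mem_setOf_eq,
          exists_and_right, exists_eq_right]
        tauto
      rw [heq]
      exact key2 K hK
    exact this.image hfcont
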